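/- For any polymatroid h on three variables X1, X2, X3, the following max-inequality holds: h({X1,X2,X3}) ≤ max(E1, E2, E3), where E1 = h({X1,X2}) + h({X1,X2}) - h({X1}), E2 = h({X2,X3}) + h({X2,X3}) - h({X2}), and E3 = h({X1,X3}) + h({X1,X3}) - h({X3}). -/
import Mathlib


/-- A polymatroid on `[n]`: non-negative, zero on `∅`, monotone and submodular. -/
def IsPolymatroid {n : ℕ} (h : Finset (Fin n) → ℝ) : Prop :=
  h ∅ = 0 ∧ (∀ X, 0 ≤ h X) ∧
    (∀ X Y : Finset (Fin n), h X ≤ h (X ∪ Y)) ∧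
    (∀ X Y : Finset (Fin n), h (X ∪ Y) + h (X ∩ Y) ≤ h X + h Y)

/-- For any polymatroid on three variables `X1 = 0`, `X2 = 1`, `X3 = 2`:
`h(X1X2X3) ≤ max(E1, E2, E3)` where `E1 = h(X1X2) + h(X2|X1)` etc. -/
theorem vee_max_inequality (h : Finset (Fin 3) → ℝ) (hp : IsPolymatroid h) :
    h Finset.univ ≤
      max (max (h {0, 1} + h {0, 1} - h {0}) (h {1, 2} + h {1, 2} - h {1}))
        (h {0, 2} + h {0, 2} - h {2}) := by
  obtain ⟨h0, hn, hm, hs⟩ := hp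
  have s1 := hs {0, 1} {1, 2}
  have s2 := hs {1, 2} {0, 2}
  have s3 := hs {0, 2} {0, 1}
  have e1 : ({0, 1} : Finset (Fin 3)) ∪ {1, 2} = Finset.univ := by decide
  have e1' : ({0, 1} : Finset (Fin 3)) ∩ {1, 2} = {1} := by decide
  have e2 : ({1, 2} : Finset (Fin 3)) ∪ {0, 2} = Finset.univ := by decide
  have e2' : ({1, 2} : Finset (Fin 3)) ∩ {0, 2} = {2} := by decide
  have e3 : ({0, 2} : Finset (Fin 3)) ∪ {0, 1} = Finset.univ := by decide
  have e3' : ({0, 2} : Finset (Fin 3)) ∩ {0, 1} = {0} := by decide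
  rw [e1, e1'] at s1
  rw [e2, e2'] at s2
  rw [e3, e3'] at s3
  set M := max (max (h {0, 1} + h {0, 1} - h {0}) (h {1, 2} + h {1, 2} - h {1}))
      (h {0, 2} + h {0, 2} - h {2}) with hM
  have m1 : h {0, 1} + h {0, 1} - h {0} ≤ M := le_trans (le_max_left _ _) (le_max_left _ _)
  have m2 : h {1, 2} + h {1, 2} - h {1} ≤ M := le_trans (le_max_right _ _) (le_max_left _ _)
  have m3 : h {0, 2} + h {0, 2} - h {2} ≤ M := le_max_right _ _
  linarith
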